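/- Let ρ be a probability distribution on a finite nonempty set Ω with Shannon entropy h := H(ρ) and q := max_{x∈Ω} ρ(x). If q ≥ 1/2 and 0 < h < log 2, then 1 − q ≤ h / log((log 2)/h). -/
import Mathlib


open Finset

noncomputable section

/-- Shannon entropy (in nats) of a finitely supported distribution, with
the convention `0 · log 0 = 0` (note `Real.log 0 = 0`). -/
def shannonEntropy {Ω : Type*} [Fintype Ω] (ρ : Ω → ℝ) : ℝ :=
  ∑ x, -(ρ x * Real.log (ρ x))

lemma aux_stmt13 (t a : ℝ) (ht0 : 0 ≤ t) (ht2 : t ≤ 1/2) (ha0 : 0 < a)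
    (ha1 : a < Real.log 2) (hH : -t * Real.log t ≤ a) :
    t ≤ a / Real.log (Real.log 2 / a) := by
  have hl2 : 0 < Real.log 2 := Real.log_pos (by norm_num)
  have hL : 0 < Real.log (Real.log 2 / a) :=
    Real.log_pos (by rw [lt_div_iff₀ ha0]; linarith)
  rw [le_div_iff₀ hL]
  rcases eq_or_lt_of_le ht0 with h' | htpos
  · rw [← h']; simpa using le_of_lt ha0
  have ht1 : t < 1 := by linarith
  have hlt : Real.log t < 0 := Real.log_neg htpos ht1
  have hh0pos : 0 < -t * Real.log t := by nlinarith
  have hlogh0 : Real.log (-t * Real.log t) = Real.log t + Real.log (-Real.log t) := by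
    rw [show -t * Real.log t = t * (-Real.log t) by ring,
      Real.log_mul (ne_of_gt htpos) (by linarith)]
  have key : Real.log (Real.log 2) ≤ Real.log (-Real.log t) := by
    apply Real.log_le_log hl2
    have h2 : Real.log t ≤ Real.log (1/2) := Real.log_le_log htpos ht2
    rw [show (1:ℝ)/2 = 2⁻¹ by norm_num, Real.log_inv] at h2
    linarith
  have hmonolog : Real.log (-t * Real.log t) ≤ Real.log a := Real.log_le_log hh0pos hH
  rw [Real.log_div (ne_of_gt hl2) (ne_of_gt ha0)]
  -- goal: t * (Real.log (Real.log 2) - Real.log a) ≤ a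
  nlinarith [hmonolog, hlogh0, key, hH, htpos.le]

/-- If `q = max_x ρ(x) ≥ 1/2` and `0 < h = H(ρ) < log 2`, then
`1 − q ≤ h / log((log 2)/h)`. -/
theorem stmt_13 {Ω : Type*} [Fintype Ω] [Nonempty Ω]
    (ρ : Ω → ℝ) (hρ0 : ∀ x, 0 ≤ ρ x) (hρ1 : ∑ x, ρ x = 1)
    (h : ℝ) (hent : shannonEntropy ρ = h) (hh0 : 0 < h) (hh1 : h < Real.log 2)
    (q : ℝ) (hqmax : ∀ x, ρ x ≤ q) (hqmem : ∃ x, ρ x = q)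
    (hq : 1 / 2 ≤ q) :
    1 - q ≤ h / Real.log (Real.log 2 / h) := by
  classical
  obtain ⟨x0, hx0⟩ := hqmem
  set t := 1 - q with ht
  have hq1 : q ≤ 1 := by
    rw [← hx0, ← hρ1]
    exact Finset.single_le_sum (fun x _ => hρ0 x) (Finset.mem_univ x0)
  have ht0 : 0 ≤ t := by linarith
  have ht2 : t ≤ 1/2 := by linarith
  have hsum : ∑ x ∈ Finset.univ.erase x0, ρ x = t := by
    have h1 := Finset.sum_erase_add Finset.univ ρ (Finset.mem_univ x0)
    rw [hρ1, hx0] at h1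
    linarith
  have hle : ∀ x ∈ Finset.univ.erase x0, ρ x ≤ t := by
    intro x hx
    rw [← hsum]
    exact Finset.single_le_sum (fun y _ => hρ0 y) hx
  have hH : -t * Real.log t ≤ h := by
    rw [← hent]
    unfold shannonEntropy
    rw [← Finset.sum_erase_add _ _ (Finset.mem_univ x0)]
    have h1 : 0 ≤ -(ρ x0 * Real.log (ρ x0)) := by
      rcases eq_or_lt_of_le (hρ0 x0) with h' | h'
      · simp [← h']
      · have := Real.log_nonpos (le_of_lt h') (hx0 ▸ hq1)
        nlinarith
    have h2 : ∑ x ∈ Finset.univ.erase x0, ρ x * (-Real.log t) ≤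
        ∑ x ∈ Finset.univ.erase x0, -(ρ x * Real.log (ρ x)) := by
      apply Finset.sum_le_sum
      intro x hx
      rcases eq_or_lt_of_le (hρ0 x) with h' | h'
      · simp [← h']
      · have hxt : ρ x ≤ t := hle x hx
        have : Real.log (ρ x) ≤ Real.log t := Real.log_le_log h' hxt
        nlinarith
    rw [← Finset.sum_mul, hsum] at h2
    linarith
  exact aux_stmt13 t h ht0 ht2 hh0 hh1 hH
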